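/- For Λ = exp(n)·exp(a)·Π₀ where Π₀ = [I; I; 0] is a fиducial spacelike p-plane in ℝ^{p,q}, a the diagonal element with λ in the (1,1) slot and λ⁻¹ in the (p+1,p+1) slot, and n the nilpotent element parametrized by B ∈ ℝ^{p+q−2}: the vector B' in the column span of Λ, orthogonal to Λ ∩ w^⊥ and satisfying ⟨B', w⟩ = 1, equals (λ² − ½B²)w + w* + B, where w = e₁, w* is the dual null vector, and B² is the Ξ-norm of B. -/

import Mathlib

open Matrix

/-- The bilinear form of signature `(p, q)` (`q = p + r`) with block matrix
`Ξ = [[0,I_p,0],[I_p,0,0],[0,0,−I_r]]`. -/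
def XiPQ (p r : ℕ) : Matrix (Fin p ⊕ (Fin p ⊕ Fin r)) (Fin p ⊕ (Fin p ⊕ Fin r)) ℝ :=
  Matrix.of fun i j =>
    match i, j with
    | .inl i, .inr (.inl j) => if i = j then (1 : ℝ) else 0
    | .inr (.inl i), .inl j => if i = j then 1 else 0
    | .inr (.inr m), .inr (.inr m') => if m = m' then -1 else 0
    | _, _ => 0

/-- The `Ξ`-pairing on `ℝ^{p,q}`. -/
def xiInner (p r : ℕ) (u v : Fin p ⊕ (Fin p ⊕ Fin r) → ℝ) : ℝ :=
  u ⬝ᵥ (XiPQ p r).mulVec v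

/-- The nilpotent element `n` of `so(p,q)` parametrized by the vector
`B = (C, D, E) ∈ ℝ^{p+q−2}` (with `C 0 = D 0 = 0` as padding). -/
def nilpOfB (p r : ℕ) [NeZero p] (C D : Fin p → ℝ) (E : Fin r → ℝ) :
    Matrix (Fin p ⊕ (Fin p ⊕ Fin r)) (Fin p ⊕ (Fin p ⊕ Fin r)) ℝ :=
  Matrix.of fun i j =>
    match i, j with
    | .inl i, .inl j => if i = 0 then -D j else 0
    | .inl i, .inr (.inl j) => if i = 0 then -C j else if j = 0 then C i else 0
    | .inl i, .inr (.inr m) => if i = 0 then E m else 0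
    | .inr (.inl i), .inr (.inl j) => if j = 0 then D i else 0
    | .inr (.inr m), .inr (.inl j) => if j = 0 then E m else 0
    | _, _ => 0

/-- The fiducial spacelike `p`-plane `Π₀ = [I; I; 0]` (as a `(p+q) × p` matrix). -/
def fidPlane (p r : ℕ) :
    Matrix (Fin p ⊕ (Fin p ⊕ Fin r)) (Fin p) ℝ :=
  Matrix.of fun i j =>
    match i with
    | .inl i' => if i' = j then (1 : ℝ) else 0
    | .inr (.inl i') => if i' = j then 1 else 0
    | .inr (.inr _) => 0

/-- The group element `exp(a)` of `A`: the diagonal matrix with `λ` in the `(1,1)` slot,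
`λ⁻¹` in the `(p+1, p+1)` slot and `1` elsewhere. -/
noncomputable def aDiag (p r : ℕ) [NeZero p] (lam : ℝ) :
    Matrix (Fin p ⊕ (Fin p ⊕ Fin r)) (Fin p ⊕ (Fin p ⊕ Fin r)) ℝ :=
  Matrix.diagonal fun i =>
    if i = Sum.inl 0 then lam else if i = Sum.inr (Sum.inl 0) then lam⁻¹ else 1

set_option linter.unusedSectionVars false
set_option linter.unnecessarySeqFocus false
set_option maxHeartbeats 1000000

section Aux
variable {p r : ℕ} [NeZero p] (C D : Fin p → ℝ) (E : Fin r → ℝ)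

lemma xiInner_eq (u v : Fin p ⊕ (Fin p ⊕ Fin r) → ℝ) :
    xiInner p r u v = (∑ i, u (.inl i) * v (.inr (.inl i))) +
      ((∑ i, u (.inr (.inl i)) * v (.inl i)) - ∑ m, u (.inr (.inr m)) * v (.inr (.inr m))) := by
  simp only [xiInner, XiPQ, dotProduct, Matrix.mulVec, Matrix.of_apply, Fintype.sum_sum_type]
  simp [dotProduct, ite_mul, mul_ite, Finset.mul_sum, mul_comm, mul_assoc, Finset.sum_sub_distrib]
  ring

lemma nilp_mulVec (y : Fin p ⊕ (Fin p ⊕ Fin r) → ℝ) :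
    nilpOfB p r C D E *ᵥ y = fun i =>
      match i with
      | .inl i => if i = 0 then
            (∑ j, -D j * y (.inl j)) + ((∑ j, -C j * y (.inr (.inl j))) + ∑ m, E m * y (.inr (.inr m)))
          else C i * y (.inr (.inl 0))
      | .inr (.inl i) => D i * y (.inr (.inl 0))
      | .inr (.inr m) => E m * y (.inr (.inl 0)) := by
  funext i
  rcases i with i | i | m <;>
    simp only [nilpOfB, Matrix.mulVec, dotProduct, Matrix.of_apply, Fintype.sum_sum_type]
  · by_cases h : i = 0 <;>
      simp [h, ite_mul, Finset.sum_ite_eq', Finset.sum_add_distrib]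
  · simp [ite_mul, Finset.sum_ite_eq']
  · simp [ite_mul, Finset.sum_ite_eq']

lemma nsq (hD : D 0 = 0) : nilpOfB p r C D E * nilpOfB p r C D E =
    Matrix.of fun i j => if i = Sum.inl 0 ∧ j = Sum.inr (Sum.inl 0)
      then (∑ m, E m * E m) - ((∑ j, C j * D j) + ∑ j, D j * C j) else (0:ℝ) := by
  have h1 : ∀ x : Fin p, (if x = 0 then (0:ℝ) else -(C x * D x)) = -(C x * D x) := by
    intro x; rcases eq_or_ne x 0 with h | h <;> simp [h, hD]
  have h1' : ∀ x : Fin p, (if x = 0 then D x * C 0 else -(C x * D x)) = -(C x * D x) := by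
    intro x; rcases eq_or_ne x 0 with h | h <;> simp [h, hD]
  ext i j
  rcases i with i | i | m
  · rcases j with j | j | m'
    · simp [Matrix.mul_apply, nilpOfB, Fintype.sum_sum_type, ite_mul, mul_ite,
        Finset.sum_ite_eq', hD]
    · by_cases hi : i = 0 <;> by_cases hj : j = 0 <;>
        simp [Matrix.mul_apply, nilpOfB, Fintype.sum_sum_type, ite_mul, mul_ite,
          Finset.sum_ite_eq', hi, hj, hD, Finset.sum_add_distrib, h1, h1', mul_comm] <;>
        ring
    · simp [Matrix.mul_apply, nilpOfB, Fintype.sum_sum_type, ite_mul, mul_ite,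
        Finset.sum_ite_eq', hD]
  · rcases j with j | j | m' <;>
      simp [Matrix.mul_apply, nilpOfB, Fintype.sum_sum_type, ite_mul, mul_ite,
        Finset.sum_ite_eq', hD]
  · rcases j with j | j | m' <;>
      simp [Matrix.mul_apply, nilpOfB, Fintype.sum_sum_type, ite_mul, mul_ite,
        Finset.sum_ite_eq', hD]

lemma ncube (hD : D 0 = 0) : nilpOfB p r C D E ^ 3 = 0 := by
  have h2 := nsq C D E hD
  have h : nilpOfB p r C D E ^ 3 = (nilpOfB p r C D E * nilpOfB p r C D E) * nilpOfB p r C D E := by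
    rw [pow_succ, sq]
  rw [h, h2]
  ext i j
  rcases j with j | j | m' <;>
    simp [Matrix.mul_apply, nilpOfB, Fintype.sum_sum_type, ite_mul, mul_ite,
      Finset.sum_ite_eq', Finset.sum_ite_eq, hD, ite_and]

lemma exp_nilp (hD : D 0 = 0) : NormedSpace.exp (nilpOfB p r C D E) =
    1 + nilpOfB p r C D E + (2⁻¹ : ℝ) • (nilpOfB p r C D E * nilpOfB p r C D E) := by
  rw [NormedSpace.exp_eq_tsum (𝕂 := ℝ)]
  beta_reduce
  have h3 := ncube C D E hD
  have hk : ∀ k ∉ Finset.range 3, ((k.factorial : ℝ)⁻¹) • nilpOfB p r C D E ^ k = 0 := by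
    intro k hk
    simp only [Finset.mem_range, not_lt] at hk
    obtain ⟨m, rfl⟩ := Nat.exists_eq_add_of_le hk
    rw [pow_add, h3, zero_mul, smul_zero]
  rw [tsum_eq_sum hk]
  norm_num [Finset.sum_range_succ, pow_succ]

/-- The closed form of `Λ *ᵥ x`. -/
noncomputable def colVec (C D : Fin p → ℝ) (E : Fin r → ℝ) (lam : ℝ) (x : Fin p → ℝ) :
    Fin p ⊕ (Fin p ⊕ Fin r) → ℝ := fun i =>
  match i with
  | .inl i => if i = 0 then lam * x 0 - (∑ j, (C j + D j) * x j)
        - lam⁻¹ * x 0 * (((∑ j, C j * D j) + ∑ j, D j * C j - ∑ m, E m * E m)/2)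
      else x i + lam⁻¹ * x 0 * C i
  | .inr (.inl i) => if i = 0 then lam⁻¹ * x 0 else x i + lam⁻¹ * x 0 * D i
  | .inr (.inr m) => lam⁻¹ * x 0 * E m

lemma col_formula (hC : C 0 = 0) (hD : D 0 = 0) (lam : ℝ) (x : Fin p → ℝ) :
    (NormedSpace.exp (nilpOfB p r C D E) * aDiag p r lam * fidPlane p r) *ᵥ x
      = colVec C D E lam x := by
  rw [← Matrix.mulVec_mulVec, ← Matrix.mulVec_mulVec]
  have h0 : fidPlane p r *ᵥ x = Sum.elim x (Sum.elim x (fun _ => 0)) := by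
    funext i
    rcases i with i | i | m <;>
      simp [fidPlane, Matrix.mulVec, dotProduct, ite_mul, Finset.sum_ite_eq]
  rw [h0]
  have h1 : aDiag p r lam *ᵥ Sum.elim x (Sum.elim x (fun _ => 0)) = (fun i =>
      match i with
      | .inl i => if i = 0 then lam * x 0 else x i
      | .inr (.inl i) => if i = 0 then lam⁻¹ * x 0 else x i
      | .inr (.inr _) => 0) := by
    funext i
    rcases i with i | i | m <;>
      simp [aDiag, Matrix.mulVec, dotProduct, Matrix.diagonal, ite_mul, Finset.sum_ite_eq,
        Fintype.sum_sum_type, Sum.elim] <;>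
      rcases eq_or_ne i 0 with h | h <;> simp [h]
  have hS : ∀ (c : ℝ) (y : Fin p ⊕ (Fin p ⊕ Fin r) → ℝ),
      ((Matrix.of fun i j : Fin p ⊕ (Fin p ⊕ Fin r) => if i = Sum.inl 0 ∧ j = Sum.inr (Sum.inl 0) then c else (0:ℝ)) *ᵥ y)
        = fun i => if i = Sum.inl 0 then c * y (Sum.inr (Sum.inl 0)) else 0 := by
    intro c y
    funext i
    rcases i with i | i | m <;>
      simp [Matrix.mulVec, dotProduct, ite_and, ite_mul, Fintype.sum_sum_type,
        Finset.sum_ite_eq, Finset.sum_ite_eq']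
  rw [h1, exp_nilp C D E hD, nsq C D E hD, Matrix.add_mulVec, Matrix.add_mulVec,
    Matrix.one_mulVec, Matrix.smul_mulVec, nilp_mulVec, hS]
  have hsum : ∀ (f : Fin p → ℝ), f 0 = 0 → ∀ (t : ℝ),
      (∑ j, f j * (if j = 0 then t else x j)) = ∑ j, f j * x j := by
    intro f hf t
    refine Finset.sum_congr rfl fun j _ => ?_
    rcases eq_or_ne j 0 with h | h <;> simp [h, hf]
  funext i
  rcases i with i | i | m
  · rcases eq_or_ne i 0 with h | h
    · simp only [colVec, Pi.add_apply, Pi.smul_apply, smul_eq_mul]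
      simp [ite_and, h, Finset.sum_ite_eq, Finset.sum_ite_eq']
      have e1 : (∑ j, if j = 0 then -(D j * (lam * x 0)) else -(D j * x j))
          = ∑ j, -(D j * x j) :=
        Finset.sum_congr rfl fun j _ => by rcases eq_or_ne j 0 with hj | hj <;> simp [hj, hD]
      have e2 : (∑ j, if j = 0 then -(C j * (lam⁻¹ * x 0)) else -(C j * x j))
          = ∑ j, -(C j * x j) :=
        Finset.sum_congr rfl fun j _ => by rcases eq_or_ne j 0 with hj | hj <;> simp [hj, hC]
      rw [e1, e2]
      simp [add_mul, Finset.sum_add_distrib, Finset.sum_neg_distrib]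
      ring
    · simp only [colVec, Pi.add_apply, Pi.smul_apply, smul_eq_mul]
      simp [ite_and, h, Finset.sum_ite_eq, Finset.sum_ite_eq']
      try ring
  · rcases eq_or_ne i 0 with h | h <;>
      simp only [colVec, Pi.add_apply, Pi.smul_apply, smul_eq_mul] <;>
      simp [ite_and, h, hD, Finset.sum_ite_eq, Finset.sum_ite_eq'] <;>
      try ring
  · simp only [colVec, Pi.add_apply, Pi.smul_apply, smul_eq_mul]
    simp [ite_and, Finset.sum_ite_eq, Finset.sum_ite_eq']
    try ring

lemma gram (hC : C 0 = 0) (hD : D 0 = 0) (lam : ℝ) (hlam : lam ≠ 0) (x x' : Fin p → ℝ) :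
    xiInner p r (colVec C D E lam x) (colVec C D E lam x') = 2 * ∑ i, x i * x' i := by
  rw [xiInner_eq]
  simp only [colVec]
  have key2 : ∀ f g f' g' : Fin p → ℝ,
      (∑ i, (if i = 0 then f i else g i) * (if i = 0 then f' i else g' i))
        = (∑ i, g i * g' i) + (f 0 * f' 0 - g 0 * g' 0) := by
    intro f g f' g'
    have h : ∀ i : Fin p, (if i = 0 then f i else g i) * (if i = 0 then f' i else g' i)
        = g i * g' i + (if i = 0 then f 0 * f' 0 - g 0 * g' 0 else 0) := by
      intro i; rcases eq_or_ne i 0 with h | h <;> simp [h]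
    simp [h, Finset.sum_add_distrib, Finset.sum_ite_eq']
  rw [key2, key2]
  have expand : ∀ (t t' : ℝ) (f g : Fin p → ℝ),
      (∑ i, (x i + t * f i) * (x' i + t' * g i))
        = (∑ i, x i * x' i) + (t' * (∑ i, x i * g i) + (t * (∑ i, f i * x' i)
            + t * t' * ∑ i, f i * g i)) := by
    intro t t' f g
    have h : ∀ i : Fin p, (x i + t * f i) * (x' i + t' * g i)
        = x i * x' i + (t' * (x i * g i) + (t * (f i * x' i) + t * t' * (f i * g i))) :=
      fun i => by ring
    simp [h, Finset.sum_add_distrib, Finset.mul_sum, mul_assoc]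
  rw [expand, expand]
  have e3 : (∑ m, lam⁻¹ * x 0 * E m * (lam⁻¹ * x' 0 * E m))
      = lam⁻¹ * x 0 * (lam⁻¹ * x' 0) * ∑ m, E m * E m := by
    rw [Finset.mul_sum]; exact Finset.sum_congr rfl fun m _ => by ring
  rw [e3]
  have e4 : (∑ j, (C j + D j) * x j) = (∑ j, x j * C j) + ∑ j, x j * D j := by
    rw [← Finset.sum_add_distrib]; exact Finset.sum_congr rfl fun j _ => by ring
  have e5 : (∑ j, (C j + D j) * x' j) = (∑ j, C j * x' j) + ∑ j, D j * x' j := by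
    rw [← Finset.sum_add_distrib]; exact Finset.sum_congr rfl fun j _ => by ring
  have e6 : (∑ j, x j * C j) = ∑ j, C j * x j := Finset.sum_congr rfl fun j _ => by ring
  have e7 : (∑ j, x j * D j) = ∑ j, D j * x j := Finset.sum_congr rfl fun j _ => by ring
  rw [e4, e5, e6, e7]
  simp only [hC, hD, mul_zero, zero_mul, add_zero, zero_add, sub_zero, mul_comm]
  field_simp
  ring

end Aux

/-- Let `Λ = exp(n)·exp(a)·Π₀` be the spacelike `p`-plane obtained from
the fiducial plane `Π₀ = [I; I; 0]`.  The vector `B′` in the column span of `Λ`,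
`Ξ`-orthogonal to `Λ ∩ w^⊥` and normalized by `⟨B′, w⟩ = 1`, equals
`(λ² − ½B²)·w + w* + B`, where `w = e₁`, `w* = e_{p+1}` and `B²` is the `Ξ`-norm of
`B`. -/
theorem grassmannian_Bprime (p r : ℕ) [NeZero p]
    (C D : Fin p → ℝ) (E : Fin r → ℝ) (hC : C 0 = 0) (hD : D 0 = 0)
    (lam : ℝ) (hlam : 0 < lam) :
    ∀ plane : Submodule ℝ (Fin p ⊕ (Fin p ⊕ Fin r) → ℝ),
      plane = LinearMap.range
        (Matrix.mulVecLin
          (NormedSpace.exp (nilpOfB p r C D E) * aDiag p r lam * fidPlane p r)) →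
    ∀ w wstar Bvec Bprime : Fin p ⊕ (Fin p ⊕ Fin r) → ℝ,
      w = Pi.single (Sum.inl 0) 1 →
      wstar = Pi.single (Sum.inr (Sum.inl 0)) 1 →
      Bvec = Sum.elim C (Sum.elim D E) →
      Bprime = (lam ^ 2 - xiInner p r Bvec Bvec / 2) • w + wstar + Bvec →
      (Bprime ∈ plane ∧
       xiInner p r Bprime w = 1 ∧
       (∀ u ∈ plane, xiInner p r u w = 0 → xiInner p r Bprime u = 0) ∧
       (∀ v ∈ plane, (∀ u ∈ plane, xiInner p r u w = 0 → xiInner p r v u = 0) →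
          xiInner p r v w = 1 → v = Bprime)) := by
  intro plane hplane w wstar Bvec Bprime hw hwstar hBvec hBp
  have hlam' : lam ≠ 0 := ne_of_gt hlam
  have hmem : ∀ u, u ∈ plane ↔ ∃ x : Fin p → ℝ, colVec C D E lam x = u := by
    intro u
    rw [hplane, LinearMap.mem_range]
    constructor
    · rintro ⟨x, rfl⟩
      exact ⟨x, by rw [Matrix.mulVecLin_apply, col_formula C D E hC hD lam x]⟩
    · rintro ⟨x, rfl⟩
      exact ⟨x, by rw [Matrix.mulVecLin_apply, col_formula C D E hC hD lam x]⟩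
  have hw' : ∀ u : Fin p ⊕ (Fin p ⊕ Fin r) → ℝ,
      xiInner p r u w = u (Sum.inr (Sum.inl 0)) := by
    intro u
    rw [hw, xiInner_eq]
    simp [Pi.single_apply, mul_ite, Finset.sum_ite_eq']
  have hq : xiInner p r Bvec Bvec
      = (∑ j, C j * D j) + ∑ j, D j * C j - ∑ m, E m * E m := by
    rw [hBvec, xiInner_eq]
    simp only [Sum.elim_inl, Sum.elim_inr]
    ring
  have hcw : ∀ x : Fin p → ℝ, (colVec C D E lam x) (Sum.inr (Sum.inl 0)) = lam⁻¹ * x 0 := by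
    intro x; simp [colVec]
  have hBcol : colVec C D E lam (fun j => if j = 0 then lam else 0) = Bprime := by
    rw [hBp, hq, hw, hwstar, hBvec]
    funext i
    rcases i with i | i | m
    · rcases eq_or_ne i 0 with h | h <;>
        simp [colVec, h, Pi.single_apply, hC, hD, mul_ite, ite_mul, Finset.sum_ite_eq'] <;>
        field_simp <;> ring
    · rcases eq_or_ne i 0 with h | h <;>
        simp [colVec, h, Pi.single_apply, hD, mul_ite, ite_mul] <;> field_simp
    · simp [colVec, Pi.single_apply]
      field_simp
  refine ⟨(hmem Bprime).2 ⟨_, hBcol⟩, ?_, ?_, ?_⟩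
  · rw [hw', ← hBcol, hcw]
    simp
    field_simp
  · intro u hu h0
    obtain ⟨x, rfl⟩ := (hmem u).1 hu
    have hx0 : x 0 = 0 := by
      rw [hw', hcw] at h0
      rcases mul_eq_zero.1 h0 with h | h
      · exact absurd h (inv_ne_zero hlam')
      · exact h
    rw [← hBcol, gram C D E hC hD lam hlam']
    have hs : (∑ i, (if i = 0 then lam else 0) * x i) = lam * x 0 := by
      simp [ite_mul, Finset.sum_ite_eq']
    rw [hs, hx0, mul_zero, mul_zero]
  · intro v hv horth hv1
    obtain ⟨x, rfl⟩ := (hmem v).1 hv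
    have hx0 : x 0 = lam := by
      rw [hw', hcw] at hv1
      field_simp at hv1
      linarith
    have hxj : ∀ j : Fin p, j ≠ 0 → x j = 0 := by
      intro j hj
      have hmemj : colVec C D E lam (Pi.single j 1) ∈ plane := (hmem _).2 ⟨_, rfl⟩
      have h0j : xiInner p r (colVec C D E lam (Pi.single j 1)) w = 0 := by
        rw [hw', hcw]
        simp [Pi.single_apply, (Ne.symm hj)]
      have h2 := horth _ hmemj h0j
      rw [gram C D E hC hD lam hlam'] at h2
      have hs : (∑ i, x i * (Pi.single j 1 : Fin p → ℝ) i) = x j := by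
        simp [Pi.single_apply, mul_ite, Finset.sum_ite_eq']
      rw [hs] at h2
      linarith
    have hx : x = fun j => if j = 0 then lam else 0 := by
      funext j
      rcases eq_or_ne j 0 with h | h
      · simp [h, hx0]
      · simp [h, hxj j h]
    rw [hx, hBcol]
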